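/- Let T > 0 and let x₁, x₂ : [0,T) → ℝ solve ẋ₁ = -φ₁(t)x₁ and ẋ₂ = -φ₂(t)x₂ + (1+φ₂²(t))x₁³, where φ₁(t) = (T/(T-t))² and φ₂(t) = (T/(T-t))³. Then lim_{t→T⁻} x₁(t) = 0 and lim_{t→T⁻} x₂(t) = 0. -/

import Mathlib

open Filter Set

section StmtAux

open Real Topology

noncomputable def P1 (T t : ℝ) : ℝ := T^2 * (T - t)⁻¹ - T
noncomputable def P2 (T t : ℝ) : ℝ := T^3/2 * ((T - t)^2)⁻¹ - T/2

lemma hasDerivAt_P1 {T t : ℝ} (ht : t ≠ T) :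
    HasDerivAt (P1 T) ((T/(T-t))^2) t := by
  have hs : T - t ≠ 0 := sub_ne_zero.mpr (Ne.symm ht)
  have h : HasDerivAt (fun t : ℝ => T - t) (-1) t := by
    simpa using (hasDerivAt_id t).const_sub T
  have h2 := (h.inv hs).const_mul (T^2)
  have h3 := h2.sub_const T
  refine h3.congr_deriv ?_
  field_simp

lemma hasDerivAt_P2 {T t : ℝ} (ht : t ≠ T) :
    HasDerivAt (P2 T) ((T/(T-t))^3) t := by
  have hs : T - t ≠ 0 := sub_ne_zero.mpr (Ne.symm ht)
  have h : HasDerivAt (fun t : ℝ => T - t) (-1) t := by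
    simpa using (hasDerivAt_id t).const_sub T
  have hp : HasDerivAt (fun t : ℝ => (T - t)^2) (2 * (T - t) ^ 1 * (-1)) t := h.pow 2
  have hne : (T - t)^2 ≠ 0 := pow_ne_zero _ hs
  have h2 := (hp.inv hne).const_mul (T^3/2)
  have h3 := h2.sub_const (T/2)
  refine h3.congr_deriv ?_
  rw [div_pow]
  field_simp

lemma pow6_le (x : ℝ) (hx : 0 ≤ x) : x^6 ≤ 720 * Real.exp x := by
  have h := Real.sum_le_exp_of_nonneg hx 7
  have h6 : x^6 / (Nat.factorial 6 : ℝ) ≤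
      ∑ i ∈ Finset.range 7, x ^ i / (Nat.factorial i : ℝ) := by
    apply Finset.single_le_sum (f := fun i => x ^ i / (Nat.factorial i : ℝ))
      (fun i _ => by positivity)
    simp
  norm_num [Nat.factorial] at h6
  linarith

lemma stmt19_core (T : ℝ) (hT : 0 < T) (a K : ℝ) (ha : 0 ≤ a)
    (hKa : a * Real.exp (2*T) * (1 + 720/T^6) ≤ K) (hK0 : 0 ≤ K) :
    ∀ t ∈ Ico (T/2) T,
      (1 + ((T/(T-t))^3)^2) * (a * Real.exp (-(P1 T t))^3) ≤
      ((T/(T-t))^3 - (T/(T-t))^2) * (K * Real.exp (-(P1 T t))) := by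
  intro t ht
  have hs0 : 0 < T - t := sub_pos.2 ht.2
  have hv2 : 2 ≤ T/(T-t) := by rw [le_div_iff₀ hs0]; nlinarith [ht.1]
  set v := T/(T-t) with hv
  have hv0 : 0 ≤ v := by linarith
  have hP1 : P1 T t = T*v - T := by
    rw [hv]; simp only [P1]; field_simp
  rw [hP1]
  have hE2 : Real.exp (-(T*v - T))^2 = Real.exp (2*T - 2*T*v) := by
    rw [pow_two, ← Real.exp_add]; ring_nf
  set E2 := Real.exp (2*T - 2*T*v) with hE2def
  have hb1 : E2 ≤ 1 := Real.exp_le_one_iff.mpr (by nlinarith)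
  have p6 := pow6_le (T*v) (by positivity)
  have step1 : (T*v)^6 * E2 ≤ 720 * Real.exp (2*T - T*v) := by
    calc (T*v)^6 * E2 ≤ (720 * Real.exp (T*v)) * E2 :=
          mul_le_mul_of_nonneg_right p6 (Real.exp_pos _).le
      _ = 720 * Real.exp (2*T - T*v) := by rw [mul_assoc, ← Real.exp_add]; ring_nf
  have step2 : Real.exp (2*T - T*v) ≤ 1 := Real.exp_le_one_iff.mpr (by nlinarith)
  have hv6 : v^6 * E2 ≤ 720 / T^6 := by
    rw [le_div_iff₀ (by positivity)]
    nlinarith [step1, step2]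
  have h1 : (1:ℝ) ≤ Real.exp (2*T) := Real.one_le_exp (by positivity)
  have hmain : (1+v^6)*E2 ≤ Real.exp (2*T) * (1 + 720/T^6) := by
    nlinarith [mul_le_mul_of_nonneg_right h1 (show (0:ℝ) ≤ 720/T^6 by positivity), hb1, hv6]
  have hfin : (1 + (v^3)^2) * (a * E2) ≤ (v^3 - v^2) * K := by
    have h2 : a * ((1+v^6)*E2) ≤ a * (Real.exp (2*T) * (1 + 720/T^6)) :=
      mul_le_mul_of_nonneg_left hmain ha
    have h3 : 0 ≤ v^3 - v^2 - 1 := by nlinarith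
    nlinarith [mul_nonneg hK0 h3, h2, hKa]
  have hEpos : (0:ℝ) < Real.exp (-(T*v - T)) := Real.exp_pos _
  have expand : Real.exp (-(T*v - T))^3 = E2 * Real.exp (-(T*v - T)) := by
    rw [hE2def, pow_succ, hE2]
  rw [expand]
  calc (1 + (v^3)^2) * (a * (E2 * Real.exp (-(T*v-T))))
      = ((1 + (v^3)^2) * (a * E2)) * Real.exp (-(T*v-T)) := by ring
    _ ≤ ((v^3 - v^2) * K) * Real.exp (-(T*v-T)) :=
        mul_le_mul_of_nonneg_right hfin hEpos.le
    _ = (v^3 - v^2) * (K * Real.exp (-(T*v-T))) := by ring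

end StmtAux

open Topology in
theorem stmt19 (T : ℝ) (hT : 0 < T)
    (x₁ x₂ : ℝ → ℝ)
    (hx₁ : ∀ t ∈ Set.Ico 0 T,
      HasDerivAt x₁ (-(T / (T - t)) ^ 2 * x₁ t) t)
    (hx₂ : ∀ t ∈ Set.Ico 0 T,
      HasDerivAt x₂
        (-(T / (T - t)) ^ 3 * x₂ t + (1 + ((T / (T - t)) ^ 3) ^ 2) * (x₁ t) ^ 3) t) :
    Tendsto x₁ (nhdsWithin T (Set.Iio T)) (nhds 0) ∧
    Tendsto x₂ (nhdsWithin T (Set.Iio T)) (nhds 0) := by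
  -- Step A: explicit formula for x₁
  have hx1eq : ∀ t ∈ Ico 0 T, x₁ t = x₁ 0 * Real.exp (-(P1 T t)) := by
    intro t ht
    have key : ∀ s ∈ Icc (0:ℝ) t, x₁ s * Real.exp (P1 T s) = x₁ 0 * Real.exp (P1 T 0) := by
      apply constant_of_has_deriv_right_zero (f := fun s => x₁ s * Real.exp (P1 T s))
      · intro s hs
        have hsI : s ∈ Ico 0 T := ⟨hs.1, lt_of_le_of_lt hs.2 ht.2⟩
        exact ((hx₁ s hsI).mul
          ((hasDerivAt_P1 (ne_of_lt hsI.2)).exp)).continuousAt.continuousWithinAt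
      · intro s hs
        have hsI : s ∈ Ico 0 T := ⟨hs.1, lt_trans hs.2 ht.2⟩
        have hd := (hx₁ s hsI).mul ((hasDerivAt_P1 (ne_of_lt hsI.2)).exp)
        have hz : -(T / (T - s)) ^ 2 * x₁ s * Real.exp (P1 T s)
            + x₁ s * (Real.exp (P1 T s) * (T/(T-s))^2) = 0 := by ring
        rw [hz] at hd
        exact hd.hasDerivWithinAt
    have h0 : P1 T 0 = 0 := by
      simp only [P1, sub_zero]
      field_simp
      ring
    have h := key t ⟨ht.1, le_refl t⟩
    rw [h0, Real.exp_zero, mul_one] at h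
    rw [← h, Real.exp_neg, mul_assoc, mul_inv_cancel₀ (Real.exp_ne_zero _), mul_one]
  -- Step B: P1 tends to infinity, hence x₁ → 0
  have hP1top : Tendsto (fun t => P1 T t) (𝓝[<] T) atTop := by
    have h1 : Tendsto (fun t : ℝ => T - t) (𝓝[<] T) (𝓝[>] 0) := by
      apply tendsto_nhdsWithin_of_tendsto_nhds_of_eventually_within
      · have h : Tendsto (fun t : ℝ => T - t) (𝓝 T) (𝓝 (T - T)) :=
          (continuous_const.sub continuous_id).tendsto T
        simpa using h.mono_left nhdsWithin_le_nhds
      · filter_upwards [self_mem_nhdsWithin] with t ht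
        exact sub_pos.mpr (mem_Iio.mp ht)
    have h2 : Tendsto (fun t : ℝ => (T - t)⁻¹) (𝓝[<] T) atTop := tendsto_inv_nhdsGT_zero.comp h1
    have h3 : Tendsto (fun t : ℝ => T^2 * (T - t)⁻¹) (𝓝[<] T) atTop :=
      h2.const_mul_atTop (by positivity)
    simpa [P1, sub_eq_add_neg] using tendsto_atTop_add_const_right _ (-T) h3
  have hExpTend : Tendsto (fun t => Real.exp (-(P1 T t))) (𝓝[<] T) (𝓝 0) :=
    Real.tendsto_exp_atBot.comp (tendsto_neg_atTop_atBot.comp hP1top)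
  have hEventIco : ∀ᶠ t in 𝓝[<] T, t ∈ Ico 0 T := by
    filter_upwards [Ioo_mem_nhdsLT_of_mem (show T ∈ Ioc (0:ℝ) T from ⟨hT, le_refl T⟩)] with t ht
    exact ⟨le_of_lt ht.1, ht.2⟩
  have hx1tend : Tendsto x₁ (𝓝[<] T) (𝓝 0) := by
    have h : Tendsto (fun t => x₁ 0 * Real.exp (-(P1 T t))) (𝓝[<] T) (𝓝 (x₁ 0 * 0)) :=
      hExpTend.const_mul _
    rw [mul_zero] at h
    refine Tendsto.congr' ?_ h
    filter_upwards [hEventIco] with t ht using (hx1eq t ht).symm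
  refine ⟨hx1tend, ?_⟩
  -- Step C: comparison function for x₂
  set a : ℝ := |x₁ 0|^3 with ha
  set K : ℝ := a * Real.exp (2*T) * (1 + 720/T^6) + |x₂ (T/2)| * Real.exp T with hK
  have ha0 : 0 ≤ a := by positivity
  have hK0 : 0 ≤ K := by positivity
  have hKa : a * Real.exp (2*T) * (1 + 720/T^6) ≤ K := by
    rw [hK]; nlinarith [abs_nonneg (x₂ (T/2)), Real.exp_pos T]
  have hcore := stmt19_core T hT a K ha0 hKa hK0
  set B : ℝ → ℝ := fun t => K * Real.exp (-(P1 T t)) with hB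
  have hsub : Ico (T/2) T ⊆ Ico 0 T := fun s hs => ⟨le_trans (by positivity) hs.1, hs.2⟩
  have hhalf : T/2 ∈ Ico (T/2) T := ⟨le_refl _, by linarith⟩
  have hP1half : P1 T (T/2) = T := by
    simp only [P1]
    have h2 : T - T/2 = T/2 := by ring
    rw [h2, inv_div]
    field_simp
    ring
  -- comparison: σ * x₂ t ≤ B t for σ = ±1
  have hcomp : ∀ σ : ℝ, |σ| = 1 → ∀ t ∈ Ico (T/2) T, σ * x₂ t ≤ B t := by
    intro σ hσ
    set u : ℝ → ℝ := fun t => (B t - σ * x₂ t) * Real.exp (P2 T t) with hu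
    set F : ℝ → ℝ := fun t =>
      (((T/(T-t))^3 - (T/(T-t))^2) * (K * Real.exp (-(P1 T t)))
        - σ * ((1 + ((T/(T-t))^3)^2) * (x₁ t)^3)) * Real.exp (P2 T t) with hF
    have hderiv : ∀ s ∈ Ico 0 T, HasDerivAt u (F s) s := by
      intro s hs
      have hne : s ≠ T := ne_of_lt hs.2
      have hB' : HasDerivAt (fun t => K * Real.exp (-(P1 T t)))
          (K * (Real.exp (-(P1 T s)) * (-((T/(T-s))^2)))) s :=
        (((hasDerivAt_P1 hne).neg).exp).const_mul K
      have hd := ((hB'.sub ((hx₂ s hs).const_mul σ)).mul ((hasDerivAt_P2 hne).exp))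
      refine hd.congr_deriv ?_
      simp only [hF, hB, Pi.sub_apply]
      ring
    have hmono : MonotoneOn u (Ico (T/2) T) := by
      apply monotoneOn_of_hasDerivWithinAt_nonneg (convex_Ico _ _)
        (f' := F)
      · intro s hs
        exact (hderiv s (hsub hs)).continuousAt.continuousWithinAt
      · intro s hs
        rw [interior_Ico] at hs
        exact (hderiv s (hsub ⟨hs.1.le, hs.2⟩)).hasDerivWithinAt
      · intro s hs
        rw [interior_Ico] at hs
        have hsI : s ∈ Ico (T/2) T := ⟨hs.1.le, hs.2⟩
        have hx1s : x₁ s = x₁ 0 * Real.exp (-(P1 T s)) := hx1eq s (hsub hsI)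
        have hq : (0:ℝ) ≤ 1 + ((T/(T-s))^3)^2 := by positivity
        have hcube : σ * (x₁ s)^3 ≤ a * Real.exp (-(P1 T s))^3 := by
          rw [hx1s, mul_pow]
          have h1 : σ * (x₁ 0)^3 ≤ a := by
            calc σ * (x₁ 0)^3 ≤ |σ * (x₁ 0)^3| := le_abs_self _
              _ = |σ| * |x₁ 0|^3 := by rw [abs_mul, abs_pow]
              _ = a := by rw [hσ, one_mul, ha]
          calc σ * ((x₁ 0)^3 * Real.exp (-(P1 T s))^3)
              = (σ * (x₁ 0)^3) * Real.exp (-(P1 T s))^3 := by ring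
            _ ≤ a * Real.exp (-(P1 T s))^3 :=
                mul_le_mul_of_nonneg_right h1 (by positivity)
        have hstep : σ * ((1 + ((T/(T-s))^3)^2) * (x₁ s)^3)
            ≤ (1 + ((T/(T-s))^3)^2) * (a * Real.exp (-(P1 T s))^3) := by
          calc σ * ((1 + ((T/(T-s))^3)^2) * (x₁ s)^3)
              = (1 + ((T/(T-s))^3)^2) * (σ * (x₁ s)^3) := by ring
            _ ≤ (1 + ((T/(T-s))^3)^2) * (a * Real.exp (-(P1 T s))^3) :=
                mul_le_mul_of_nonneg_left hcube hq
        have hge := le_trans hstep (hcore s hsI)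
        simp only [hF]
        exact mul_nonneg (sub_nonneg.mpr hge) (Real.exp_pos _).le
    intro t ht
    have humono := hmono hhalf ht ht.1
    have hu0 : 0 ≤ u (T/2) := by
      simp only [hu, hB, hP1half]
      apply mul_nonneg _ (Real.exp_pos _).le
      have h1 : σ * x₂ (T/2) ≤ |x₂ (T/2)| := by
        calc σ * x₂ (T/2) ≤ |σ * x₂ (T/2)| := le_abs_self _
          _ = |x₂ (T/2)| := by rw [abs_mul, hσ, one_mul]
      have h2 : |x₂ (T/2)| ≤ K * Real.exp (-T) := by
        have : (|x₂ (T/2)| * Real.exp T) * Real.exp (-T) ≤ K * Real.exp (-T) := by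
          apply mul_le_mul_of_nonneg_right _ (Real.exp_pos _).le
          have hpos : 0 ≤ a * Real.exp (2*T) * (1 + 720/T^6) := by positivity
          rw [hK]; linarith
        calc |x₂ (T/2)| = (|x₂ (T/2)| * Real.exp T) * Real.exp (-T) := by
              rw [mul_assoc, ← Real.exp_add, add_neg_cancel, Real.exp_zero, mul_one]
          _ ≤ K * Real.exp (-T) := this
      linarith
    have hut : 0 ≤ u t := le_trans hu0 humono
    have h0' : 0 * Real.exp (P2 T t) ≤ (B t - σ * x₂ t) * Real.exp (P2 T t) := by
      rw [zero_mul]; exact hut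
    have := le_of_mul_le_mul_right h0' (Real.exp_pos (P2 T t))
    linarith
  -- Step D: squeeze
  have hBtend : Tendsto B (𝓝[<] T) (𝓝 0) := by
    have h : Tendsto (fun t => K * Real.exp (-(P1 T t))) (𝓝[<] T) (𝓝 (K * 0)) :=
      hExpTend.const_mul _
    rw [mul_zero] at h
    exact h
  have hnegBtend : Tendsto (fun t => -B t) (𝓝[<] T) (𝓝 0) := by
    simpa using hBtend.neg
  apply tendsto_of_tendsto_of_tendsto_of_le_of_le' hnegBtend hBtend
  · filter_upwards [Ioo_mem_nhdsLT_of_mem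
      (show T ∈ Ioc (T/2) T from ⟨by linarith, le_refl T⟩)] with t ht
    have h := hcomp (-1) (by simp) t ⟨ht.1.le, ht.2⟩
    linarith
  · filter_upwards [Ioo_mem_nhdsLT_of_mem
      (show T ∈ Ioc (T/2) T from ⟨by linarith, le_refl T⟩)] with t ht
    have h := hcomp 1 (by simp) t ⟨ht.1.le, ht.2⟩
    linarith
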